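/- Let N be a matching class in a category C with pullbacks, m : M → X an N-adhesive monomorphism and n : N → X a monomorphism in N. Form the pullback P of m and n, and the pushout U of the two projections P → M and P → N. Then the induced morphism u : U → X is a monomorphism, and in the poset of subobjects of X, [u] is the join (supremum) of [m] and [n]. -/
import Mathlib


open CategoryTheory CategoryTheory.Limits

universe v u

variable {C : Type u} [Category.{v} C]

/-- A pushout square is *stable* if every pullback of it (in the sense of a
commutative cube all of whose vertical faces are pullbacks and whose bottom
face is the given square) has a pushout as its top face. -/
def StablePushout {X Y Z W : C} (f : X ⟶ Y) (g : X ⟶ Z) (inl : Y ⟶ W) (inr : Z ⟶ W) : Prop :=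
  IsPushout f g inl inr ∧
  ∀ ⦃X' Y' Z' W' : C⦄ (f' : X' ⟶ Y') (g' : X' ⟶ Z') (inl' : Y' ⟶ W') (inr' : Z' ⟶ W')
    (x : X' ⟶ X) (y : Y' ⟶ Y) (z : Z' ⟶ Z) (w : W' ⟶ W),
    f' ≫ inl' = g' ≫ inr' →
    IsPullback f' x y f → IsPullback g' x z g →
    IsPullback inl' y w inl → IsPullback inr' z w inr →
    IsPushout f' g' inl' inr'

/-- A pushout square is a *Van Kampen square* if for every commutative cube over it
whose back and left faces (the faces over the two span legs) are pullbacks, the top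
face is a pushout iff the front and right faces are pullbacks. -/
def VanKampenSquare {X Y Z W : C} (f : X ⟶ Y) (g : X ⟶ Z) (inl : Y ⟶ W) (inr : Z ⟶ W) : Prop :=
  IsPushout f g inl inr ∧
  ∀ ⦃X' Y' Z' W' : C⦄ (f' : X' ⟶ Y') (g' : X' ⟶ Z') (inl' : Y' ⟶ W') (inr' : Z' ⟶ W')
    (x : X' ⟶ X) (y : Y' ⟶ Y) (z : Z' ⟶ Z) (w : W' ⟶ W),
    f' ≫ inl' = g' ≫ inr' →
    IsPullback f' x y f → IsPullback g' x z g →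
    inl' ≫ w = y ≫ inl → inr' ≫ w = z ≫ inr →
    (IsPushout f' g' inl' inr' ↔ (IsPullback inl' y w inl ∧ IsPullback inr' z w inr))

/-- A morphism `m : X ⟶ Y` is `N`-preadhesive if for every `n : X ⟶ Z` in `N` there is
a stable pushout square of `m` along `n` which is also a pullback square. -/
def Preadhesive (N : MorphismProperty C) {X Y : C} (m : X ⟶ Y) : Prop :=
  ∀ ⦃Z : C⦄ (n : X ⟶ Z), N n →
    ∃ (W : C) (p : Z ⟶ W) (q : Y ⟶ W),
      StablePushout n m p q ∧ IsPullback n m p q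

/-- A morphism is `N`-adhesive if all of its pullbacks are `N`-preadhesive. -/
def NAdhesive (N : MorphismProperty C) {X Y : C} (m : X ⟶ Y) : Prop :=
  ∀ ⦃X' Y' : C⦄ (m' : X' ⟶ Y') (x : X' ⟶ X) (y : Y' ⟶ Y),
    IsPullback m' x y m → Preadhesive N m'

/-- A *matching class*: contains all isos, closed under composition and decomposition,
stable under pullbacks and pushouts. -/
structure MatchingClass (N : MorphismProperty C) : Prop where
  iso_mem : ∀ ⦃X Y : C⦄ (f : X ⟶ Y), IsIso f → N f
  comp_mem : ∀ ⦃X Y Z : C⦄ (f : X ⟶ Y) (g : Y ⟶ Z), N f → N g → N (f ≫ g)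
  decomp : ∀ ⦃X Y Z : C⦄ (f : X ⟶ Y) (g : Y ⟶ Z), N (f ≫ g) → N g → N f
  pullback_stable : ∀ ⦃P X Y Z : C⦄ (fst : P ⟶ X) (snd : P ⟶ Y) (f : X ⟶ Z) (g : Y ⟶ Z),
    IsPullback fst snd f g → N f → N snd
  pushout_stable : ∀ ⦃Z X Y P : C⦄ (f : Z ⟶ X) (g : Z ⟶ Y) (inl : X ⟶ P) (inr : Y ⟶ P),
    IsPushout f g inl inr → N g → N inl

/-- A *stable system of monos*. -/
structure StableSystem (M : MorphismProperty C) : Prop where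
  mono : ∀ ⦃X Y : C⦄ (f : X ⟶ Y), M f → Mono f
  iso_mem : ∀ ⦃X Y : C⦄ (f : X ⟶ Y), IsIso f → M f
  comp_mem : ∀ ⦃X Y Z : C⦄ (f : X ⟶ Y) (g : Y ⟶ Z), M f → M g → M (f ≫ g)
  pullback_stable : ∀ ⦃P X Y Z : C⦄ (fst : P ⟶ X) (snd : P ⟶ Y) (f : X ⟶ Z) (g : Y ⟶ Z),
    IsPullback fst snd f g → M f → M snd

/-- `C` is `M`-adhesive: `M`-pullbacks exist, and pushouts along arrows of `M`
(along arbitrary morphisms) exist and are Van Kampen squares. -/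
def MAdhesive (M : MorphismProperty C) : Prop :=
  (∀ ⦃X Y Z : C⦄ (m : X ⟶ Y) (g : Z ⟶ Y), M m →
    ∃ (P : C) (p : P ⟶ X) (q : P ⟶ Z), IsPullback p q m g) ∧
  (∀ ⦃X Y Z : C⦄ (m : X ⟶ Y) (f : X ⟶ Z), M m →
    ∃ (W : C) (inl : Z ⟶ W) (inr : Y ⟶ W), VanKampenSquare f m inl inr)

/-- The class of regular monomorphisms. -/
def RegMonos (C : Type u) [Category.{v} C] : MorphismProperty C :=
  fun _ _ f => Nonempty (RegularMono f)


theorem StablePushout.flip' {X Y Z W : C} {f : X ⟶ Y} {g : X ⟶ Z} {inl : Y ⟶ W} {inr : Z ⟶ W}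
    (h : StablePushout f g inl inr) : StablePushout g f inr inl :=
  ⟨h.1.flip, fun _ _ _ _ f' g' inl' inr' x y z w comm pb1 pb2 pb3 pb4 =>
    (h.2 g' f' inr' inl' x z y w comm.symm pb2 pb1 pb4 pb3).flip⟩

theorem sideA [HasPullbacks C] {P M B X W : C}
    {m : M ⟶ X} {n : B ⟶ X} [Mono m]
    {p₁ : P ⟶ M} {p₂ : P ⟶ B} (hpb : IsPullback p₁ p₂ m n)
    {pw : M ⟶ W} {qw : B ⟶ W} (hsp : StablePushout p₁ p₂ pw qw)
    {uw : W ⟶ X} (hm' : pw ≫ uw = m) (hn' : qw ≫ uw = n)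
    {T : C} (v : T ⟶ W) (k : T ⟶ M) (hvk : v ≫ uw = k ≫ m) : v = k ≫ pw := by
  haveI : Mono p₂ := ⟨fun {T'} a b h => by
    apply hpb.hom_ext _ h
    rw [← cancel_mono m, Category.assoc, Category.assoc, hpb.w,
      ← Category.assoc, ← Category.assoc, h]⟩
  obtain ⟨Q, r₁, r₂, hr⟩ : ∃ (Q : C) (r₁ : Q ⟶ W) (r₂ : Q ⟶ M), IsPullback r₁ r₂ uw m :=
    ⟨_, _, _, IsPullback.of_hasPullback uw m⟩
  have hcs : pw ≫ uw = 𝟙 M ≫ m := by rw [hm', Category.id_comp]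
  let s : M ⟶ Q := hr.lift pw (𝟙 M) hcs
  have s_fst : s ≫ r₁ = pw := hr.lift_fst _ _ _
  have s_snd : s ≫ r₂ = 𝟙 M := hr.lift_snd _ _ _
  have hct : (p₂ ≫ qw) ≫ uw = p₁ ≫ m := by rw [Category.assoc, hn', hpb.w]
  let t : P ⟶ Q := hr.lift (p₂ ≫ qw) p₁ hct
  have t_fst : t ≫ r₁ = p₂ ≫ qw := hr.lift_fst _ _ _
  have t_snd : t ≫ r₂ = p₁ := hr.lift_snd _ _ _
  have big1 : IsPullback (s ≫ r₂) (𝟙 M) m (pw ≫ uw) := by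
    rw [s_snd, hm']; exact IsKernelPair.id_of_mono m
  have face1 : IsPullback s (𝟙 M) r₁ pw :=
    IsPullback.of_right big1 (by rw [s_fst, Category.id_comp]) hr.flip
  have big2 : IsPullback (t ≫ r₂) p₂ m (qw ≫ uw) := by
    rw [t_snd, hn']; exact hpb
  have face2 : IsPullback t p₂ r₁ qw :=
    IsPullback.of_right big2 t_fst hr.flip
  have face3 : IsPullback p₁ (𝟙 P) (𝟙 M) p₁ :=
    IsPullback.of_vert_isIso ⟨by simp⟩
  have face4 : IsPullback (𝟙 P) (𝟙 P) p₂ p₂ := IsKernelPair.id_of_mono p₂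
  have topcomm : p₁ ≫ s = 𝟙 P ≫ t := by
    rw [Category.id_comp]
    apply hr.hom_ext
    · rw [Category.assoc, s_fst, t_fst, hsp.1.w]
    · rw [Category.assoc, s_snd, t_snd, Category.comp_id]
  have hQpo : IsPushout p₁ (𝟙 P) s t :=
    hsp.2 p₁ (𝟙 P) s t (𝟙 P) (𝟙 M) p₂ r₁ topcomm face3 face4 face1 face2
  let d : Q ⟶ M := hQpo.desc (𝟙 M) p₁ (by simp)
  have sd : s ≫ d = 𝟙 M := hQpo.inl_desc _ _ _
  have td : t ≫ d = p₁ := hQpo.inr_desc _ _ _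
  have ds : d ≫ s = 𝟙 Q := by
    apply hQpo.hom_ext
    · rw [← Category.assoc, sd, Category.id_comp, Category.comp_id]
    · rw [← Category.assoc, td, Category.comp_id, topcomm, Category.id_comp]
  let l : T ⟶ Q := hr.lift v k hvk
  have lds : l ≫ d ≫ s = l := by rw [ds, Category.comp_id]
  have h2 : l ≫ d = k := by
    calc l ≫ d = (l ≫ d) ≫ s ≫ r₂ := by rw [s_snd, Category.comp_id]
      _ = (l ≫ d ≫ s) ≫ r₂ := by simp only [Category.assoc]
      _ = l ≫ r₂ := by rw [lds]
      _ = k := hr.lift_snd _ _ _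
  calc v = l ≫ r₁ := (hr.lift_fst _ _ _).symm
    _ = (l ≫ d ≫ s) ≫ r₁ := by rw [lds]
    _ = (l ≫ d) ≫ s ≫ r₁ := by simp only [Category.assoc]
    _ = k ≫ pw := by rw [h2, s_fst]

theorem auxMono [HasPullbacks C] {P M B X W : C}
    {m : M ⟶ X} {n : B ⟶ X} [Mono m] [Mono n]
    {p₁ : P ⟶ M} {p₂ : P ⟶ B} (hpb : IsPullback p₁ p₂ m n)
    {pw : M ⟶ W} {qw : B ⟶ W} (hsp : StablePushout p₁ p₂ pw qw)
    {uw : W ⟶ X} (hm' : pw ≫ uw = m) (hn' : qw ≫ uw = n) : Mono uw := by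
  constructor
  intro K f g hfg
  obtain ⟨Y₁, y₁, inl₁, hY⟩ : ∃ (Y₁ : C) (y₁ : Y₁ ⟶ M) (inl₁ : Y₁ ⟶ K), IsPullback y₁ inl₁ pw f :=
    ⟨_, _, _, IsPullback.of_hasPullback pw f⟩
  obtain ⟨Z₁, z₁, inr₁, hZ⟩ : ∃ (Z₁ : C) (z₁ : Z₁ ⟶ B) (inr₁ : Z₁ ⟶ K), IsPullback z₁ inr₁ qw f :=
    ⟨_, _, _, IsPullback.of_hasPullback qw f⟩
  obtain ⟨X₁, x₁, k₁, hX⟩ : ∃ (X₁ : C) (x₁ : X₁ ⟶ P) (k₁ : X₁ ⟶ K), IsPullback x₁ k₁ (p₁ ≫ pw) f :=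
    ⟨_, _, _, IsPullback.of_hasPullback (p₁ ≫ pw) f⟩
  let f' : X₁ ⟶ Y₁ := hY.lift (x₁ ≫ p₁) k₁ (by rw [Category.assoc]; exact hX.w)
  have f'_fst : f' ≫ y₁ = x₁ ≫ p₁ := hY.lift_fst _ _ _
  have f'_snd : f' ≫ inl₁ = k₁ := hY.lift_snd _ _ _
  let g' : X₁ ⟶ Z₁ := hZ.lift (x₁ ≫ p₂) k₁ (by rw [Category.assoc, ← hsp.1.w]; exact hX.w)
  have g'_fst : g' ≫ z₁ = x₁ ≫ p₂ := hZ.lift_fst _ _ _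
  have g'_snd : g' ≫ inr₁ = k₁ := hZ.lift_snd _ _ _
  have faceL : IsPullback inl₁ y₁ f pw := hY.flip
  have faceR : IsPullback inr₁ z₁ f qw := hZ.flip
  have big1 : IsPullback (f' ≫ inl₁) x₁ f (p₁ ≫ pw) := by rw [f'_snd]; exact hX.flip
  have face1 : IsPullback f' x₁ y₁ p₁ := IsPullback.of_right big1 f'_fst faceL
  have big2 : IsPullback (g' ≫ inr₁) x₁ f (p₂ ≫ qw) := by
    rw [g'_snd, ← hsp.1.w]; exact hX.flip
  have face2 : IsPullback g' x₁ z₁ p₂ := IsPullback.of_right big2 g'_fst faceR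
  have topcomm : f' ≫ inl₁ = g' ≫ inr₁ := by rw [f'_snd, g'_snd]
  have hKpo : IsPushout f' g' inl₁ inr₁ :=
    hsp.2 f' g' inl₁ inr₁ x₁ y₁ z₁ f topcomm face1 face2 faceL faceR
  apply hKpo.hom_ext
  · have h1 : inl₁ ≫ f = y₁ ≫ pw := hY.w.symm
    have h2 : inl₁ ≫ g = y₁ ≫ pw := by
      apply sideA hpb hsp hm' hn'
      rw [Category.assoc, ← hfg, ← Category.assoc, ← hY.w, Category.assoc, hm']
    rw [h1, h2]
  · have h1 : inr₁ ≫ f = z₁ ≫ qw := hZ.w.symm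
    have h2 : inr₁ ≫ g = z₁ ≫ qw := by
      apply sideA hpb.flip hsp.flip' hn' hm'
      rw [Category.assoc, ← hfg, ← Category.assoc, ← hZ.w, Category.assoc, hn']
    rw [h1, h2]

/-- The pushout over the pullback of an `N`-adhesive mono `m` and a mono `n ∈ N`
gives a mono which is the join of `[m]` and `[n]` in the subobject poset. -/
theorem stmt10 [HasPullbacks C] (N : MorphismProperty C) (hN : MatchingClass N)
    {M B X P U : C}
    (m : M ⟶ X) (n : B ⟶ X) [Mono m] [Mono n]
    (hm : NAdhesive N m) (hn : N n)
    (p₁ : P ⟶ M) (p₂ : P ⟶ B) (hpb : IsPullback p₁ p₂ m n)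
    (u₂ : M ⟶ U) (u₁ : B ⟶ U) (hpo : IsPushout p₁ p₂ u₂ u₁)
    (u : U ⟶ X) (hu₂ : u₂ ≫ u = m) (hu₁ : u₁ ≫ u = n) :
    Mono u ∧
      ∀ {K : C} (k : K ⟶ X), Mono k →
        (∃ a : M ⟶ K, a ≫ k = m) → (∃ b : B ⟶ K, b ≫ k = n) →
        ∃ c : U ⟶ K, c ≫ k = u := by
  haveI : Mono n := inferInstance
  have hNp₁ : N p₁ := hN.pullback_stable p₂ p₁ n m hpb.flip hn
  obtain ⟨W, pw, qw, hsp, hpbw⟩ := hm p₂ p₁ n hpb.flip p₁ hNp₁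
  let φ : W ⟶ U := hsp.1.desc u₂ u₁ hpo.w
  have hφ₂ : pw ≫ φ = u₂ := hsp.1.inl_desc _ _ _
  have hφ₁ : qw ≫ φ = u₁ := hsp.1.inr_desc _ _ _
  let ψ : U ⟶ W := hpo.desc pw qw hsp.1.w
  have hψ₂ : u₂ ≫ ψ = pw := hpo.inl_desc _ _ _
  have hψ₁ : u₁ ≫ ψ = qw := hpo.inr_desc _ _ _
  have hψφ : ψ ≫ φ = 𝟙 U := by
    apply hpo.hom_ext
    · rw [Category.comp_id, ← Category.assoc, hψ₂, hφ₂]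
    · rw [Category.comp_id, ← Category.assoc, hψ₁, hφ₁]
  have hmw : Mono (φ ≫ u) := auxMono hpb hsp
    (by rw [← Category.assoc, hφ₂, hu₂]) (by rw [← Category.assoc, hφ₁, hu₁])
  constructor
  · constructor
    intro T a b hab
    have h1 : (a ≫ ψ) ≫ φ ≫ u = (b ≫ ψ) ≫ φ ≫ u := by
      simp only [Category.assoc]
      rw [← Category.assoc ψ φ u, hψφ, Category.id_comp, hab]
    have h2 : a ≫ ψ = b ≫ ψ := hmw.right_cancellation _ _ h1
    calc a = a ≫ ψ ≫ φ := by rw [hψφ, Category.comp_id]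
      _ = b ≫ ψ ≫ φ := by rw [← Category.assoc, h2, Category.assoc]
      _ = b := by rw [hψφ, Category.comp_id]
  · intro K k hk hA hB
    haveI := hk
    obtain ⟨a, ha⟩ := hA
    obtain ⟨b, hb⟩ := hB
    have hab : p₁ ≫ a = p₂ ≫ b := by
      rw [← cancel_mono k, Category.assoc, Category.assoc, ha, hb, hpb.w]
    refine ⟨hpo.desc a b hab, hpo.hom_ext ?_ ?_⟩
    · rw [← Category.assoc, hpo.inl_desc, ha, hu₂]
    · rw [← Category.assoc, hpo.inr_desc, hb, hu₁]
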